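/- For any type p with denominator n and any probability distribution q on an alphabet of size d with q strictly positive, the probability of the type class T_p^n under the i.i.d. product measure q^n satisfies (n+1)^{−d} · 2^{−nD(p‖q)} ≤ q^n(T_p^n) ≤ 2^{−nD(p‖q)}. -/

import Mathlib

open Finset Nat

private lemma fact_pow_le (k j : ℕ) : k ! * k ^ j ≤ j ! * k ^ k := by
  have key : ∀ d m : ℕ, (m + d)! ≤ m ! * (m + d) ^ d := by
    intro d
    induction d with
    | zero => simp
    | succ d ih =>
      intro m
      calc (m + (d + 1))! = (m + d + 1) * (m + d)! := rfl
        _ ≤ (m + d + 1) * (m ! * (m + d) ^ d) := Nat.mul_le_mul_left _ (ih m)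
        _ ≤ (m + d + 1) * (m ! * (m + d + 1) ^ d) := by
            exact Nat.mul_le_mul_left _ (Nat.mul_le_mul_left _ (Nat.pow_le_pow_left (by omega) d))
        _ = m ! * (m + (d + 1)) ^ (d + 1) := by ring
  rcases le_total j k with h | h
  · obtain ⟨d, rfl⟩ : ∃ d, k = j + d := ⟨k - j, by omega⟩
    calc (j + d)! * (j + d) ^ j ≤ (j ! * (j + d) ^ d) * (j + d) ^ j :=
          Nat.mul_le_mul_right _ (key d j)
      _ = j ! * (j + d) ^ (j + d) := by rw [mul_assoc, ← pow_add]; ring_nf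
  · obtain ⟨d, rfl⟩ : ∃ d, j = k + d := ⟨j - k, by omega⟩
    calc k ! * k ^ (k + d) = (k ! * k ^ d) * k ^ k := by rw [mul_assoc, ← pow_add]; ring_nf
      _ ≤ (k ! * (k + 1) ^ d) * k ^ k :=
          Nat.mul_le_mul_right _ (Nat.mul_le_mul_left _ (Nat.pow_le_pow_left (by omega) d))
      _ ≤ (k + d)! * k ^ k := Nat.mul_le_mul_right _ Nat.factorial_mul_pow_le_factorial

private lemma prod_comp_type {A M : Type*} [Fintype A] [DecidableEq A] [CommMonoid M]
    {n : ℕ} (w : A → M) (x : Fin n → A) :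
    ∏ i, w (x i) = ∏ a, w a ^ (Finset.univ.filter (fun i => x i = a)).card := by
  have h0 := Finset.prod_comp (s := (Finset.univ : Finset (Fin n))) w x
  rw [h0]
  refine Finset.prod_subset (Finset.subset_univ _) ?_
  intro a _ ha
  have : (Finset.univ.filter fun i => x i = a) = ∅ := by
    ext i
    simp only [Finset.mem_filter, Finset.mem_univ, true_and, Finset.notMem_empty, iff_false]
    intro h
    exact ha (Finset.mem_image.2 ⟨i, Finset.mem_univ i, h⟩)
  simp [this]

private def typeOf {A : Type*} [Fintype A] [DecidableEq A] {n : ℕ} (x : Fin n → A) : A → ℕ :=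
  fun a => (Finset.univ.filter (fun i => x i = a)).card

private lemma typeOf_mem {A : Type*} [Fintype A] [DecidableEq A] {n : ℕ} (x : Fin n → A) :
    typeOf x ∈ Finset.piAntidiag Finset.univ n := by
  rw [Finset.mem_piAntidiag]
  refine ⟨?_, fun i _ => Finset.mem_univ i⟩
  have := Finset.card_eq_sum_card_fiberwise (fun (i : Fin n) (_ : i ∈ Finset.univ) =>
    Finset.mem_univ (x i))
  rw [show typeOf x = fun a => (Finset.univ.filter (fun i => x i = a)).card from rfl]
  simpa [typeOf] using this.symm

private lemma sum_prod_type {A R : Type*} [Fintype A] [DecidableEq A] [CommSemiring R]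
    (n : ℕ) (w : A → R) :
    (∑ a, w a) ^ n = ∑ k ∈ Finset.piAntidiag Finset.univ n,
      ((Finset.univ.filter (fun x : Fin n → A => typeOf x = k)).card : R) * ∏ a, w a ^ k a := by
  have h1 : (∑ a, w a) ^ n = ∏ _i : Fin n, ∑ a, w a := by
    simp
  rw [h1, Finset.prod_univ_sum,
    show (Fintype.piFinset fun _ : Fin n => (Finset.univ : Finset A)) = Finset.univ from
      Fintype.piFinset_univ]
  rw [← Finset.sum_fiberwise_of_maps_to (g := typeOf)
    (fun x _ => typeOf_mem x) (fun x => ∏ i, w (x i))]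
  refine Finset.sum_congr rfl ?_
  intro k _
  rw [Finset.sum_congr rfl (fun x hx => ?_), Finset.sum_const, nsmul_eq_mul]
  rw [prod_comp_type w x]
  show ∏ a, w a ^ typeOf x a = ∏ a, w a ^ k a
  rw [(Finset.mem_filter.1 hx).2]

private lemma card_type_class {A : Type*} [Fintype A] [DecidableEq A] {n : ℕ} {k : A → ℕ}
    (hk : k ∈ Finset.piAntidiag Finset.univ n) :
    (Finset.univ.filter (fun x : Fin n → A => typeOf x = k)).card
      = Nat.multinomial Finset.univ k := by
  classical
  have prodX : ∀ k' : A → ℕ, (∏ a, (MvPolynomial.X a : MvPolynomial A ℚ) ^ k' a)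
      = MvPolynomial.monomial (Finsupp.equivFunOnFinite.symm k') 1 := by
    intro k'
    rw [← MvPolynomial.prod_X_pow_eq_monomial, eq_comm]
    refine Finset.prod_subset (Finset.subset_univ _) ?_
    intro a _ ha
    rw [Finsupp.notMem_support_iff.1 ha, pow_zero]
  have h2 := Finset.sum_pow_eq_sum_piAntidiag (Finset.univ : Finset A)
    (fun a => (MvPolynomial.X a : MvPolynomial A ℚ)) n
  rw [sum_prod_type n (fun a => (MvPolynomial.X a : MvPolynomial A ℚ))] at h2
  have h3 := congrArg (MvPolynomial.coeff (Finsupp.equivFunOnFinite.symm k)) h2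
  have key : ∀ (N : ℕ) (k' : A → ℕ),
      MvPolynomial.coeff (Finsupp.equivFunOnFinite.symm k)
        ((N : MvPolynomial A ℚ) * ∏ a, MvPolynomial.X a ^ k' a)
      = if k' = k then (N : ℚ) else 0 := by
    intro N k'
    rw [prodX k', show ((N : MvPolynomial A ℚ)) = MvPolynomial.C (N : ℚ) by push_cast; rfl,
      MvPolynomial.coeff_C_mul, MvPolynomial.coeff_monomial]
    by_cases h : k' = k
    · simp [h]
    · rw [if_neg (fun hc => h (Finsupp.equivFunOnFinite.symm.injective hc)), if_neg h, mul_zero]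
  rw [MvPolynomial.coeff_sum, MvPolynomial.coeff_sum] at h3
  simp only [key] at h3
  rw [Finset.sum_ite_eq' _ k, Finset.sum_ite_eq' _ k, if_pos hk, if_pos hk] at h3
  exact_mod_cast h3

private lemma multinomial_compare {A : Type*} [Fintype A] [DecidableEq A] {n : ℕ}
    (c j : A → ℕ) (hc : ∑ a, c a = n) (hj : ∑ a, j a = n) :
    Nat.multinomial Finset.univ j * ∏ a, c a ^ j a
      ≤ Nat.multinomial Finset.univ c * ∏ a, c a ^ c a := by
  have hKpos : 0 < (∏ a, (j a)!) * ∏ a, (c a)! :=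
    Nat.mul_pos (Finset.prod_pos fun a _ => Nat.factorial_pos _)
      (Finset.prod_pos fun a _ => Nat.factorial_pos _)
  refine Nat.le_of_mul_le_mul_left ?_ hKpos
  have hjs := Nat.multinomial_spec Finset.univ j
  have hcs := Nat.multinomial_spec Finset.univ c
  rw [hj] at hjs
  rw [hc] at hcs
  calc ((∏ a, (j a)!) * ∏ a, (c a)!) * (Nat.multinomial Finset.univ j * ∏ a, c a ^ j a)
      = n ! * ∏ a, ((c a)! * c a ^ j a) := by
        rw [Finset.prod_mul_distrib, ← hjs]; ring
    _ ≤ n ! * ∏ a, ((j a)! * c a ^ c a) := by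
        refine Nat.mul_le_mul_left _ (Finset.prod_le_prod' fun a _ => fact_pow_le (c a) (j a))
    _ = ((∏ a, (j a)!) * ∏ a, (c a)!) * (Nat.multinomial Finset.univ c * ∏ a, c a ^ c a) := by
        rw [Finset.prod_mul_distrib, ← hcs]; ring

private lemma card_piAntidiag_le {A : Type*} [Fintype A] [DecidableEq A] (n : ℕ) :
    (Finset.piAntidiag (Finset.univ : Finset A) n).card ≤ (n + 1) ^ Fintype.card A := by
  have hsub : Finset.piAntidiag (Finset.univ : Finset A) n
      ⊆ Fintype.piFinset fun _ : A => Finset.range (n + 1) := by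
    intro k hk
    rw [Finset.mem_piAntidiag] at hk
    rw [Fintype.mem_piFinset]
    intro a
    rw [Finset.mem_range, Nat.lt_succ_iff, ← hk.1]
    exact Finset.single_le_sum (fun a _ => Nat.zero_le (k a)) (Finset.mem_univ a)
  calc (Finset.piAntidiag (Finset.univ : Finset A) n).card
      ≤ (Fintype.piFinset fun _ : A => Finset.range (n + 1)).card := Finset.card_le_card hsub
    _ = (n + 1) ^ Fintype.card A := by simp [Fintype.card_piFinset]

theorem stmt4 {A : Type*} [Fintype A] [DecidableEq A] (n : ℕ) (hn : 0 < n)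
    (c : A → ℕ) (hc : ∑ a, c a = n)
    (q : A → ℝ) (hq : ∀ a, 0 < q a) (hq1 : ∑ a, q a = 1) :
    let d := Fintype.card A
    let D : ℝ := ∑ a, ((c a : ℝ) / n) * Real.logb 2 (((c a : ℝ) / n) / q a)
    let T := Finset.univ.filter
      (fun x : Fin n → A => ∀ a, (Finset.univ.filter (fun i => x i = a)).card = c a)
    (1 / ((n : ℝ) + 1) ^ d) * (2 : ℝ) ^ (-(n : ℝ) * D) ≤ ∑ x ∈ T, ∏ i, q (x i) ∧
      ∑ x ∈ T, ∏ i, q (x i) ≤ (2 : ℝ) ^ (-(n : ℝ) * D) := by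
  intro d D T
  classical
  have hn' : (n : ℝ) ≠ 0 := Nat.cast_ne_zero.2 hn.ne'
  have hnpos : (0 : ℝ) < (n : ℝ) := by exact_mod_cast hn
  have hpnn : ∀ a, (0 : ℝ) ≤ (c a : ℝ) / n := fun a =>
    div_nonneg (Nat.cast_nonneg _) (Nat.cast_nonneg _)
  have hpsum : ∑ a, ((c a : ℝ) / n) = 1 := by
    rw [← Finset.sum_div, show ∑ a, ((c a : ℝ)) = (n : ℝ) by exact_mod_cast hc]
    exact div_self hn'
  have hc' : c ∈ Finset.piAntidiag (Finset.univ : Finset A) n := by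
    rw [Finset.mem_piAntidiag]; exact ⟨hc, fun a _ => Finset.mem_univ a⟩
  have hTT : T = Finset.univ.filter (fun x : Fin n → A => typeOf x = c) := by
    ext x; simp [T, typeOf, funext_iff]
  have hsum : ∀ w : A → ℝ, ∑ x ∈ T, ∏ i, w (x i)
      = (Nat.multinomial Finset.univ c : ℝ) * ∏ a, w a ^ c a := by
    intro w
    rw [hTT, Finset.sum_congr rfl (fun x hx => ?_), Finset.sum_const, nsmul_eq_mul,
      card_type_class hc']
    rw [prod_comp_type w x]
    show ∏ a, w a ^ typeOf x a = _
    rw [(Finset.mem_filter.1 hx).2]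
  set M : ℝ := (Nat.multinomial Finset.univ c : ℝ) * ∏ a, ((c a : ℝ) / n) ^ c a with hM
  have hMnn : 0 ≤ M := mul_nonneg (Nat.cast_nonneg _)
    (Finset.prod_nonneg fun a _ => pow_nonneg (hpnn a) _)
  have hone : (1 : ℝ) = ∑ k ∈ Finset.piAntidiag (Finset.univ : Finset A) n,
      (Nat.multinomial Finset.univ k : ℝ) * ∏ a, ((c a : ℝ) / n) ^ k a := by
    have h := sum_prod_type (R := ℝ) n (fun a => (c a : ℝ) / n)
    rw [hpsum, one_pow] at h
    rw [h]
    exact Finset.sum_congr rfl fun k hk => by rw [card_type_class hk]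
  have hpk : ∀ (j : A → ℕ), (∑ a, j a = n) →
      ∏ a, ((c a : ℝ) / n) ^ j a = (∏ a, (c a : ℝ) ^ j a) / (n : ℝ) ^ n := by
    intro j hjs
    simp only [div_pow]
    rw [Finset.prod_div_distrib, Finset.prod_pow_eq_pow_sum, hjs]
  have hMter : ∀ k ∈ Finset.piAntidiag (Finset.univ : Finset A) n,
      (Nat.multinomial Finset.univ k : ℝ) * ∏ a, ((c a : ℝ) / n) ^ k a ≤ M := by
    intro k hk
    rw [Finset.mem_piAntidiag] at hk
    calc (Nat.multinomial Finset.univ k : ℝ) * ∏ a, ((c a : ℝ) / n) ^ k a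
        = ((Nat.multinomial Finset.univ k * ∏ a, c a ^ k a : ℕ) : ℝ) / (n : ℝ) ^ n := by
          rw [hpk k hk.1]; push_cast; ring
      _ ≤ ((Nat.multinomial Finset.univ c * ∏ a, c a ^ c a : ℕ) : ℝ) / (n : ℝ) ^ n := by
          have h2 : ((Nat.multinomial Finset.univ k * ∏ a, c a ^ k a : ℕ) : ℝ)
              ≤ ((Nat.multinomial Finset.univ c * ∏ a, c a ^ c a : ℕ) : ℝ) := by
            exact_mod_cast multinomial_compare c k hc hk.1
          exact (div_le_div_iff_of_pos_right (by positivity)).2 h2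
      _ = M := by rw [hM, hpk c hc]; push_cast; ring
  have hMub : M ≤ 1 := by
    rw [hone]
    exact Finset.single_le_sum
      (f := fun k => (Nat.multinomial Finset.univ k : ℝ) * ∏ a, ((c a : ℝ) / n) ^ k a)
      (fun k _ => mul_nonneg (Nat.cast_nonneg _)
        (Finset.prod_nonneg fun a _ => pow_nonneg (hpnn a) _)) hc'
  have hMlb : 1 / ((n : ℝ) + 1) ^ d ≤ M := by
    have h1 : (1 : ℝ) ≤ ((n : ℝ) + 1) ^ d * M := by
      calc (1 : ℝ)
          = ∑ k ∈ Finset.piAntidiag (Finset.univ : Finset A) n,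
            (Nat.multinomial Finset.univ k : ℝ) * ∏ a, ((c a : ℝ) / n) ^ k a := hone
        _ ≤ ∑ _k ∈ Finset.piAntidiag (Finset.univ : Finset A) n, M :=
            Finset.sum_le_sum hMter
        _ = ((Finset.piAntidiag (Finset.univ : Finset A) n).card : ℝ) * M := by
            rw [Finset.sum_const, nsmul_eq_mul]
        _ ≤ ((n : ℝ) + 1) ^ d * M := by
            have hcard : ((Finset.piAntidiag (Finset.univ : Finset A) n).card : ℝ)
                ≤ ((n : ℝ) + 1) ^ d := by
              have := card_piAntidiag_le (A := A) n
              calc ((Finset.piAntidiag (Finset.univ : Finset A) n).card : ℝ)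
                  ≤ (((n + 1) ^ Fintype.card A : ℕ) : ℝ) := by exact_mod_cast this
                _ = ((n : ℝ) + 1) ^ d := by push_cast; rfl
            exact mul_le_mul_of_nonneg_right hcard hMnn
    rw [div_le_iff₀ (by positivity)]
    linarith [h1]
  -- relate q-sum to M and the exponential factor
  have hfac : ∏ a, q a ^ c a
      = (∏ a, ((c a : ℝ) / n) ^ c a) * ∏ a, (q a / ((c a : ℝ) / n)) ^ c a := by
    rw [← Finset.prod_mul_distrib]
    refine Finset.prod_congr rfl fun a _ => ?_
    rcases Nat.eq_zero_or_pos (c a) with h | h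
    · simp [h]
    · have hpa : ((c a : ℝ) / n) ≠ 0 := by
        have : (0 : ℝ) < (c a : ℝ) := by exact_mod_cast h
        positivity
      rw [← mul_pow]; congr 1; field_simp
  have hD : -(n : ℝ) * D = ∑ a, (c a : ℝ) * Real.logb 2 (q a / ((c a : ℝ) / n)) := by
    have hDdef : D = ∑ a, ((c a : ℝ) / n) * Real.logb 2 (((c a : ℝ) / n) / q a) := rfl
    rw [hDdef, Finset.mul_sum]
    refine Finset.sum_congr rfl fun a _ => ?_
    rcases Nat.eq_zero_or_pos (c a) with h | h
    · simp [h]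
    · have hca : (0 : ℝ) < (c a : ℝ) := by exact_mod_cast h
      have hrw : Real.logb 2 (q a / ((c a : ℝ) / n))
          = - Real.logb 2 (((c a : ℝ) / n) / q a) := by
        rw [← Real.logb_inv, inv_div]
      rw [hrw]
      field_simp
  have hterm : ∀ a, (2 : ℝ) ^ ((c a : ℝ) * Real.logb 2 (q a / ((c a : ℝ) / n)))
      = (q a / ((c a : ℝ) / n)) ^ c a := by
    intro a
    rcases Nat.eq_zero_or_pos (c a) with h | h
    · simp [h]
    · have hca : (0 : ℝ) < (c a : ℝ) := by exact_mod_cast h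
      have hy : (0 : ℝ) < q a / ((c a : ℝ) / n) := div_pos (hq a) (div_pos hca hnpos)
      rw [mul_comm, Real.rpow_mul (by norm_num : (0:ℝ) ≤ 2),
        Real.rpow_logb (by norm_num) (by norm_num) hy, Real.rpow_natCast]
  have hR : (2 : ℝ) ^ (-(n : ℝ) * D) = ∏ a, (q a / ((c a : ℝ) / n)) ^ c a := by
    rw [hD, Real.rpow_def_of_pos (by norm_num : (0:ℝ) < 2), Finset.mul_sum, Real.exp_sum]
    refine Finset.prod_congr rfl fun a _ => ?_
    rw [← Real.rpow_def_of_pos (by norm_num : (0:ℝ) < 2), hterm a]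
  have hqsum : ∑ x ∈ T, ∏ i, q (x i) = M * (2 : ℝ) ^ (-(n : ℝ) * D) := by
    rw [hsum q, hfac, hR, hM]; ring
  have hRnn : (0 : ℝ) ≤ (2 : ℝ) ^ (-(n : ℝ) * D) := Real.rpow_nonneg (by norm_num) _
  constructor
  · rw [hqsum]
    exact mul_le_mul_of_nonneg_right hMlb hRnn
  · rw [hqsum]
    calc M * (2 : ℝ) ^ (-(n : ℝ) * D) ≤ 1 * (2 : ℝ) ^ (-(n : ℝ) * D) :=
          mul_le_mul_of_nonneg_right hMub hRnn
      _ = (2 : ℝ) ^ (-(n : ℝ) * D) := one_mul _
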